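/- For every natural number n ≥ 2, 0 < ζ(3) − b_n/a_n. -/

import Mathlib

/-- ζ(3), the sum of the series ∑_{m=1}^∞ 1/m³. -/
noncomputable def zeta3 : ℝ := ∑' m : ℕ, 1 / ((m : ℝ) + 1) ^ 3

/-- `z n = ∑_{m=1}^n 1/m³`. -/
noncomputable def zseq (n : ℕ) : ℝ := ∑ m ∈ Finset.Icc 1 n, 1 / (m : ℝ) ^ 3

/-- `a n = ∑_{k=0}^n C(n,k)² C(n+k,k)²`. -/
noncomputable def aseq (n : ℕ) : ℝ :=
  ∑ k ∈ Finset.range (n + 1), (n.choose k : ℝ) ^ 2 * ((n + k).choose k : ℝ) ^ 2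

/-- `b n = a n * z n + ∑_{k=1}^n ∑_{m=1}^k (-1)^{m+1} C(n,k)² C(n+k,k)²
      / (2 m³ C(n,m) C(n+m,m))`. -/
noncomputable def bseq (n : ℕ) : ℝ :=
  aseq n * zseq n +
    ∑ k ∈ Finset.Icc 1 n, ∑ m ∈ Finset.Icc 1 k,
      (-1 : ℝ) ^ (m + 1) * (n.choose k : ℝ) ^ 2 * ((n + k).choose k : ℝ) ^ 2 /
        (2 * (m : ℝ) ^ 3 * (n.choose m : ℝ) * ((n + m).choose m : ℝ))

open Finset
set_option maxHeartbeats 4000000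

noncomputable def lam (n k : ℕ) : ℝ := (n.choose k : ℝ) ^ 2 * ((n + k).choose k : ℝ) ^ 2
noncomputable def eps (n m : ℕ) : ℝ :=
  (-1 : ℝ) ^ (m + 1) / (2 * (m : ℝ) ^ 3 * (n.choose m : ℝ) * ((n + m).choose m : ℝ))
noncomputable def cc (n k : ℕ) : ℝ := zseq n + ∑ m ∈ Finset.Icc 1 k, eps n m
noncomputable def dd (n k : ℕ) : ℝ :=
  (-1 : ℝ) ^ k * (k.factorial : ℝ) ^ 2 * ((n - k - 1).factorial : ℝ) /
    ((n : ℝ) ^ 2 * ((n + k).factorial : ℝ))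
noncomputable def BB (n k : ℕ) : ℝ :=
  4 * (2*(n:ℝ)+1) * ((k:ℝ)*(2*(k:ℝ)+1) - (2*(n:ℝ)+1)^2) * lam n k
noncomputable def AT (n k : ℕ) : ℝ :=
  5 * (2*(n:ℝ)+1) * (-1:ℝ)^(k+1) * (k:ℝ) * (n.choose k : ℝ) * ((n + k).choose k : ℝ) /
    ((n:ℝ) * ((n:ℝ)+1))
noncomputable def AA (n k : ℕ) : ℝ := BB n k * cc n k + AT n k
noncomputable def PP (n : ℕ) : ℝ := 34*(n:ℝ)^3 + 51*(n:ℝ)^2 + 27*(n:ℝ) + 5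

lemma factR_pos (n : ℕ) : (0:ℝ) < (n.factorial : ℝ) := by exact_mod_cast n.factorial_pos

lemma chooseR (a b : ℕ) :
    ((a + b).choose b : ℝ) * ((b.factorial : ℝ) * (a.factorial : ℝ)) = ((a+b).factorial : ℝ) := by
  have := Nat.choose_mul_factorial_mul_factorial (show b ≤ a + b by omega)
  have h2 : a + b - b = a := by omega
  rw [h2] at this
  have := congrArg (Nat.cast : ℕ → ℝ) this
  push_cast at this
  linarith [this]

lemma chooseR' (a b c : ℕ) (h : c = a + b) :
    ((c).choose b : ℝ) = ((c.factorial : ℝ)) / ((b.factorial : ℝ) * (a.factorial : ℝ)) := by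
  subst h; rw [eq_div_iff (by positivity)]; exact chooseR a b

lemma factS (a b : ℕ) (c : ℝ) (h : b = a + 1) (h2 : c = (a:ℝ) + 1) :
    (b.factorial : ℝ) = c * (a.factorial : ℝ) := by
  subst h; rw [Nat.factorial_succ]; push_cast [h2]; ring

-- ratio lemmas: x = C(l+j+2, l+1), y = C(2l+j+3, l+1)
lemma rE1 (l j : ℕ) : (((l+j+3).choose (l+1)) : ℝ)
    = ((l:ℝ)+j+3)/((j:ℝ)+2) * (((l+j+2).choose (l+1)):ℝ) := by
  rw [chooseR' (j+2) (l+1) (l+j+3) (by ring), chooseR' (j+1) (l+1) (l+j+2) (by ring),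
      factS (j+1) (j+2) ((j:ℝ)+2) (by ring) (by push_cast; ring),
      factS (l+j+2) (l+j+3) ((l:ℝ)+j+3) (by ring) (by push_cast; ring)]
  have h2' : ((j:ℝ)+2) ≠ 0 := by positivity
  have hf1 : ((j+1).factorial : ℝ) ≠ 0 := (factR_pos _).ne'
  have hf2 : ((l+1).factorial : ℝ) ≠ 0 := (factR_pos _).ne'
  field_simp

lemma rE2 (l j : ℕ) : (((2*l+j+4).choose (l+1)) : ℝ)
    = (2*(l:ℝ)+j+4)/((l:ℝ)+j+3) * (((2*l+j+3).choose (l+1)):ℝ) := by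
  rw [chooseR' (l+j+3) (l+1) (2*l+j+4) (by ring), chooseR' (l+j+2) (l+1) (2*l+j+3) (by ring),
      factS (l+j+2) (l+j+3) ((l:ℝ)+j+3) (by ring) (by push_cast; ring),
      factS (2*l+j+3) (2*l+j+4) (2*(l:ℝ)+j+4) (by ring) (by push_cast; ring)]
  have h2' : ((l:ℝ)+j+3) ≠ 0 := by positivity
  have hf1 : ((l+j+2).factorial : ℝ) ≠ 0 := (factR_pos _).ne'
  have hf2 : ((l+1).factorial : ℝ) ≠ 0 := (factR_pos _).ne'
  field_simp

lemma rE3 (l j : ℕ) : (((l+j+1).choose (l+1)) : ℝ)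
    = ((j:ℝ)+1)/((l:ℝ)+j+2) * (((l+j+2).choose (l+1)):ℝ) := by
  rw [chooseR' j (l+1) (l+j+1) (by ring), chooseR' (j+1) (l+1) (l+j+2) (by ring),
      factS j (j+1) ((j:ℝ)+1) rfl (by push_cast; ring),
      factS (l+j+1) (l+j+2) ((l:ℝ)+j+2) (by ring) (by push_cast; ring)]
  have h2' : ((l:ℝ)+j+2) ≠ 0 := by positivity
  have hf1 : ((j).factorial : ℝ) ≠ 0 := (factR_pos _).ne'
  have hf2 : ((l+1).factorial : ℝ) ≠ 0 := (factR_pos _).ne'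
  field_simp

lemma rE4 (l j : ℕ) : (((2*l+j+2).choose (l+1)) : ℝ)
    = ((l:ℝ)+j+2)/(2*(l:ℝ)+j+3) * (((2*l+j+3).choose (l+1)):ℝ) := by
  rw [chooseR' (l+j+1) (l+1) (2*l+j+2) (by ring), chooseR' (l+j+2) (l+1) (2*l+j+3) (by ring),
      factS (l+j+1) (l+j+2) ((l:ℝ)+j+2) (by ring) (by push_cast; ring),
      factS (2*l+j+2) (2*l+j+3) (2*(l:ℝ)+j+3) (by ring) (by push_cast; ring)]
  have h2' : (2*(l:ℝ)+j+3) ≠ 0 := by positivity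
  have hf1 : ((l+j+1).factorial : ℝ) ≠ 0 := (factR_pos _).ne'
  have hf2 : ((l+1).factorial : ℝ) ≠ 0 := (factR_pos _).ne'
  field_simp

lemma rE5 (l j : ℕ) : (((l+j+2).choose l) : ℝ)
    = ((l:ℝ)+1)/((j:ℝ)+2) * (((l+j+2).choose (l+1)):ℝ) := by
  rw [chooseR' (j+2) l (l+j+2) (by ring), chooseR' (j+1) (l+1) (l+j+2) (by ring),
      factS (j+1) (j+2) ((j:ℝ)+2) (by ring) (by push_cast; ring),
      factS l (l+1) ((l:ℝ)+1) rfl (by push_cast; ring)]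
  have h2' : ((j:ℝ)+2) ≠ 0 := by positivity
  have hf1 : ((j+1).factorial : ℝ) ≠ 0 := (factR_pos _).ne'
  have hf2 : ((l).factorial : ℝ) ≠ 0 := (factR_pos _).ne'
  field_simp

lemma rE6 (l j : ℕ) : (((2*l+j+2).choose l) : ℝ)
    = ((l:ℝ)+1)/(2*(l:ℝ)+j+3) * (((2*l+j+3).choose (l+1)):ℝ) := by
  rw [chooseR' (l+j+2) l (2*l+j+2) (by ring), chooseR' (l+j+2) (l+1) (2*l+j+3) (by ring),
      factS (2*l+j+2) (2*l+j+3) (2*(l:ℝ)+j+3) (by ring) (by push_cast; ring),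
      factS l (l+1) ((l:ℝ)+1) rfl (by push_cast; ring)]
  have h2' : (2*(l:ℝ)+j+3) ≠ 0 := by positivity
  have hf1 : ((l+j+2).factorial : ℝ) ≠ 0 := (factR_pos _).ne'
  have hf2 : ((l).factorial : ℝ) ≠ 0 := (factR_pos _).ne'
  field_simp

lemma chooseR_pos (n k : ℕ) (h : k ≤ n) : (0:ℝ) < (n.choose k : ℝ) := by
  exact_mod_cast Nat.choose_pos h

lemma identI (l j : ℕ) :
    ((l:ℝ)+j+3)^3 * lam (l+j+3) (l+1) - PP (l+j+2) * lam (l+j+2) (l+1)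
      + ((l:ℝ)+j+2)^3 * lam (l+j+1) (l+1) = BB (l+j+2) (l+1) - BB (l+j+2) l := by
  unfold BB PP lam
  rw [show (l+j+3)+(l+1) = 2*l+j+4 from by ring, show (l+j+2)+(l+1) = 2*l+j+3 from by ring,
      show (l+j+1)+(l+1) = 2*l+j+2 from by ring, show (l+j+2)+l = 2*l+j+2 from by ring]
  rw [rE1, rE2, rE3, rE4, rE5, rE6]
  have h1 : ((l:ℝ)+1) ≠ 0 := by positivity
  have h2 : ((j:ℝ)+1) ≠ 0 := by positivity
  have h2' : ((j:ℝ)+2) ≠ 0 := by positivity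
  have h3 : ((l:ℝ)+(j:ℝ)+2) ≠ 0 := by positivity
  have h3' : ((l:ℝ)+(j:ℝ)+3) ≠ 0 := by positivity
  have h5 : (2*(l:ℝ)+(j:ℝ)+3) ≠ 0 := by positivity
  push_cast
  field_simp
  ring

lemma rE7 (l j : ℕ) : dd (l+j+3) (l+1)
    = (-1:ℝ)^(l+1) / (((l:ℝ)+j+3)^2 * (2*(l:ℝ)+j+4)
        * ((((l+j+2).choose (l+1)):ℝ) * (((2*l+j+3).choose (l+1)):ℝ))) := by
  unfold dd
  rw [show (l+j+3)-(l+1)-1 = j+1 from by omega, show (l+j+3)+(l+1) = 2*l+j+4 from by ring]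
  rw [chooseR' (j+1) (l+1) (l+j+2) (by ring), chooseR' (l+j+2) (l+1) (2*l+j+3) (by ring),
      factS (2*l+j+3) (2*l+j+4) (2*(l:ℝ)+j+4) (by ring) (by push_cast; ring)]
  have h3' : ((l:ℝ)+(j:ℝ)+3) ≠ 0 := by positivity
  have h5' : (2*(l:ℝ)+(j:ℝ)+4) ≠ 0 := by positivity
  have hf1 : ((j+1).factorial : ℝ) ≠ 0 := (factR_pos _).ne'
  have hf2 : ((l+1).factorial : ℝ) ≠ 0 := (factR_pos _).ne'
  have hf3 : ((l+j+2).factorial : ℝ) ≠ 0 := (factR_pos _).ne'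
  have hf4 : ((2*l+j+3).factorial : ℝ) ≠ 0 := (factR_pos _).ne'
  push_cast
  field_simp

lemma rE8 (l j : ℕ) : dd (l+j+2) (l+1)
    = (-1:ℝ)^(l+1) / (((l:ℝ)+j+2)^2 * ((j:ℝ)+1)
        * ((((l+j+2).choose (l+1)):ℝ) * (((2*l+j+3).choose (l+1)):ℝ))) := by
  unfold dd
  rw [show (l+j+2)-(l+1)-1 = j from by omega, show (l+j+2)+(l+1) = 2*l+j+3 from by ring]
  rw [chooseR' (j+1) (l+1) (l+j+2) (by ring), chooseR' (l+j+2) (l+1) (2*l+j+3) (by ring),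
      factS j (j+1) ((j:ℝ)+1) rfl (by push_cast; ring)]
  have h3 : ((l:ℝ)+(j:ℝ)+2) ≠ 0 := by positivity
  have h2 : ((j:ℝ)+1) ≠ 0 := by positivity
  have hf1 : ((j).factorial : ℝ) ≠ 0 := (factR_pos _).ne'
  have hf2 : ((l+1).factorial : ℝ) ≠ 0 := (factR_pos _).ne'
  have hf3 : ((l+j+2).factorial : ℝ) ≠ 0 := (factR_pos _).ne'
  have hf4 : ((2*l+j+3).factorial : ℝ) ≠ 0 := (factR_pos _).ne'
  push_cast
  field_simp

lemma sgnA (l : ℕ) : ((-1:ℝ))^(l+1+1) = (-1:ℝ)^l := by rw [pow_succ, pow_succ]; ring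
lemma sgnB (l : ℕ) : ((-1:ℝ))^(l+1) = -(-1:ℝ)^l := by rw [pow_succ]; ring

lemma identII (l j : ℕ) :
    ((l:ℝ)+j+3)^3 * lam (l+j+3) (l+1) * dd (l+j+3) (l+1)
      - ((l:ℝ)+j+2)^3 * lam (l+j+1) (l+1) * dd (l+j+2) (l+1)
    = BB (l+j+2) l * eps (l+j+2) (l+1) + AT (l+j+2) (l+1) - AT (l+j+2) l := by
  rw [rE7, rE8]
  unfold BB AT lam eps
  rw [show (l+j+3)+(l+1) = 2*l+j+4 from by ring, show (l+j+2)+(l+1) = 2*l+j+3 from by ring,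
      show (l+j+1)+(l+1) = 2*l+j+2 from by ring, show (l+j+2)+l = 2*l+j+2 from by ring]
  rw [rE1, rE2, rE3, rE4, rE5, rE6, sgnA, sgnB]
  have h1 : ((l:ℝ)+1) ≠ 0 := by positivity
  have h2 : ((j:ℝ)+1) ≠ 0 := by positivity
  have h2' : ((j:ℝ)+2) ≠ 0 := by positivity
  have h3 : ((l:ℝ)+(j:ℝ)+2) ≠ 0 := by positivity
  have h3' : ((l:ℝ)+(j:ℝ)+3) ≠ 0 := by positivity
  have h5 : (2*(l:ℝ)+(j:ℝ)+3) ≠ 0 := by positivity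
  have h5' : (2*(l:ℝ)+(j:ℝ)+4) ≠ 0 := by positivity
  have hx : (((l+j+2).choose (l+1)):ℝ) ≠ 0 := (chooseR_pos _ _ (by omega)).ne'
  have hy : (((2*l+j+3).choose (l+1)):ℝ) ≠ 0 := (chooseR_pos _ _ (by omega)).ne'
  push_cast
  field_simp
  ring

-- boundary atoms: u = C(2l+2, l+1)
lemma rT1 (l : ℕ) : (((l+2).choose (l+1)) : ℝ) = (l:ℝ)+2 := by
  have := Nat.choose_succ_self_right (l+1)
  rw [show (l+1+1) = l+2 from rfl] at this
  rw [this]; push_cast; ring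

lemma rT2 (l : ℕ) : (((2*l+3).choose (l+1)) : ℝ)
    = (2*(l:ℝ)+3)/((l:ℝ)+2) * (((2*l+2).choose (l+1)):ℝ) := by
  rw [chooseR' (l+2) (l+1) (2*l+3) (by ring), chooseR' (l+1) (l+1) (2*l+2) (by ring),
      factS (l+1) (l+2) ((l:ℝ)+2) (by ring) (by push_cast; ring),
      factS (2*l+2) (2*l+3) (2*(l:ℝ)+3) (by ring) (by push_cast; ring)]
  have h1 : ((l:ℝ)+2) ≠ 0 := by positivity
  have hf1 : ((l+1).factorial : ℝ) ≠ 0 := (factR_pos _).ne'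
  have hf2 : ((2*l+2).factorial : ℝ) ≠ 0 := (factR_pos _).ne'
  field_simp

lemma rT3 (l : ℕ) : (((2*l+4).choose (l+2)) : ℝ)
    = (2*(2*(l:ℝ)+3))/((l:ℝ)+2) * (((2*l+2).choose (l+1)):ℝ) := by
  rw [chooseR' (l+2) (l+2) (2*l+4) (by ring), chooseR' (l+1) (l+1) (2*l+2) (by ring),
      factS (l+1) (l+2) ((l:ℝ)+2) (by ring) (by push_cast; ring),
      factS (2*l+3) (2*l+4) (2*(l:ℝ)+4) (by ring) (by push_cast; ring),
      factS (2*l+2) (2*l+3) (2*(l:ℝ)+3) (by ring) (by push_cast; ring)]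
  have h1 : ((l:ℝ)+2) ≠ 0 := by positivity
  have hf1 : ((l+1).factorial : ℝ) ≠ 0 := (factR_pos _).ne'
  have hf2 : ((2*l+2).factorial : ℝ) ≠ 0 := (factR_pos _).ne'
  field_simp; ring

lemma rT4 (l : ℕ) : (((2*l+1).choose l) : ℝ) = (((2*l+2).choose (l+1)):ℝ) / 2 := by
  rw [chooseR' (l+1) l (2*l+1) (by ring), chooseR' (l+1) (l+1) (2*l+2) (by ring),
      factS (l) (l+1) ((l:ℝ)+1) rfl (by push_cast; ring),
      factS (2*l+1) (2*l+2) (2*(l:ℝ)+2) (by ring) (by push_cast; ring)]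
  have h1 : ((l:ℝ)+1) ≠ 0 := by positivity
  have hf1 : ((l).factorial : ℝ) ≠ 0 := (factR_pos _).ne'
  have hf2 : ((l+1).factorial : ℝ) ≠ 0 := (factR_pos _).ne'
  have hf3 : ((2*l+1).factorial : ℝ) ≠ 0 := (factR_pos _).ne'
  field_simp

lemma rT5 (l : ℕ) : (((l+1).choose l) : ℝ) = (l:ℝ)+1 := by
  have := Nat.choose_succ_self_right l
  rw [this]; push_cast; ring

lemma rT6 (l : ℕ) : dd (l+2) (l+1)
    = (-1:ℝ)^(l+1) / (((l:ℝ)+2)^2 * (2*(l:ℝ)+3) * (((2*l+2).choose (l+1)):ℝ)) := by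
  unfold dd
  rw [show (l+2)-(l+1)-1 = 0 from by omega, show (l+2)+(l+1) = 2*l+3 from by ring]
  rw [chooseR' (l+1) (l+1) (2*l+2) (by ring),
      factS (2*l+2) (2*l+3) (2*(l:ℝ)+3) (by ring) (by push_cast; ring)]
  have h1 : ((l:ℝ)+2) ≠ 0 := by positivity
  have h2 : (2*(l:ℝ)+3) ≠ 0 := by positivity
  have hf1 : ((l+1).factorial : ℝ) ≠ 0 := (factR_pos _).ne'
  have hf2 : ((2*l+2).factorial : ℝ) ≠ 0 := (factR_pos _).ne'
  simp only [Nat.factorial_zero]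
  push_cast
  field_simp

lemma identI_top (l : ℕ) :
    ((l:ℝ)+2)^3 * lam (l+2) (l+1) - PP (l+1) * lam (l+1) (l+1)
      = BB (l+1) (l+1) - BB (l+1) l := by
  unfold BB PP lam
  rw [show (l+2)+(l+1) = 2*l+3 from by ring, show (l+1)+(l+1) = 2*l+2 from by ring,
      show (l+1)+l = 2*l+1 from by ring]
  rw [rT1, rT2, rT4, rT5, Nat.choose_self]
  have h1 : ((l:ℝ)+2) ≠ 0 := by positivity
  push_cast
  field_simp
  ring

lemma identII_top (l : ℕ) :
    ((l:ℝ)+2)^3 * lam (l+2) (l+1) * dd (l+2) (l+1)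
      = BB (l+1) l * eps (l+1) (l+1) + AT (l+1) (l+1) - AT (l+1) l := by
  rw [rT6]
  unfold BB AT lam eps
  rw [show (l+2)+(l+1) = 2*l+3 from by ring, show (l+1)+(l+1) = 2*l+2 from by ring,
      show (l+1)+l = 2*l+1 from by ring]
  rw [rT1, rT2, rT4, rT5, Nat.choose_self, sgnA, sgnB]
  have h1 : ((l:ℝ)+1) ≠ 0 := by positivity
  have h2 : ((l:ℝ)+2) ≠ 0 := by positivity
  have h3 : (2*(l:ℝ)+3) ≠ 0 := by positivity
  have hu : (((2*l+2).choose (l+1)):ℝ) ≠ 0 := (chooseR_pos _ _ (by omega)).ne'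
  push_cast
  field_simp
  ring

lemma identK (l : ℕ) :
    ((l:ℝ)+2)^3 * lam (l+2) (l+2) = - BB (l+1) (l+1) := by
  unfold BB lam
  rw [show (l+2)+(l+2) = 2*l+4 from by ring, show (l+1)+(l+1) = 2*l+2 from by ring]
  rw [rT3, Nat.choose_self, Nat.choose_self]
  have h1 : ((l:ℝ)+2) ≠ 0 := by positivity
  push_cast
  field_simp
  ring

lemma identTop (l : ℕ) :
    ((l:ℝ)+2)^3 * lam (l+2) (l+2) * (dd (l+2) (l+1) + eps (l+2) (l+2))
      = - AT (l+1) (l+1) := by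
  rw [rT6]
  unfold AT lam eps
  rw [show (l+2)+(l+2) = 2*l+4 from by ring, show (l+1)+(l+1) = 2*l+2 from by ring]
  rw [rT3, Nat.choose_self, Nat.choose_self,
      show ((-1:ℝ))^(l+2+1) = -(-1:ℝ)^l from by rw [pow_succ, pow_succ, pow_succ]; ring,
      sgnA]
  have h1 : ((l:ℝ)+1) ≠ 0 := by positivity
  have h2 : ((l:ℝ)+2) ≠ 0 := by positivity
  have h3 : (2*(l:ℝ)+3) ≠ 0 := by positivity
  have hu : (((2*l+2).choose (l+1)):ℝ) ≠ 0 := (chooseR_pos _ _ (by omega)).ne'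
  push_cast
  field_simp
  ring
section STRUCT
-- (appended after part1+part2; assumes those lemmas)

lemma ident_diff (l j : ℕ) :
    eps (l+j+2) (l+1) - eps (l+j+1) (l+1) = dd (l+j+2) (l+1) - dd (l+j+2) l := by
  unfold eps dd
  rw [show (l+j+2)+(l+1) = 2*l+j+3 from by ring, show (l+j+2)+l = 2*l+j+2 from by ring,
      show (l+j+1)+(l+1) = 2*l+j+2 from by ring,
      show (l+j+2)-(l+1)-1 = j from by omega, show (l+j+2)-l-1 = j+1 from by omega]
  rw [chooseR' (j+1) (l+1) (l+j+2) (by ring), chooseR' (l+j+2) (l+1) (2*l+j+3) (by ring),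
      chooseR' j (l+1) (l+j+1) (by ring), chooseR' (l+j+1) (l+1) (2*l+j+2) (by ring)]
  rw [factS j (j+1) ((j:ℝ)+1) rfl (by push_cast; ring),
      factS l (l+1) ((l:ℝ)+1) rfl (by push_cast; ring),
      factS (l+j+1) (l+j+2) ((l:ℝ)+j+2) (by ring) (by push_cast; ring),
      factS (2*l+j+2) (2*l+j+3) (2*(l:ℝ)+j+3) (by ring) (by push_cast; ring)]
  rw [show ((-1:ℝ))^(l+1+1) = (-1:ℝ)^l from by rw [pow_succ, pow_succ]; ring,
      show ((-1:ℝ))^(l+1) = -(-1:ℝ)^l from by rw [pow_succ]; ring]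
  push_cast
  have h1 : ((l:ℝ)+1) ≠ 0 := by positivity
  have h2 : ((j:ℝ)+1) ≠ 0 := by positivity
  have h3 : ((l:ℝ)+(j:ℝ)+2) ≠ 0 := by positivity
  have h4 : ((l:ℝ)+(j:ℝ)+1) ≠ 0 := by positivity
  have h5 : (2*(l:ℝ)+(j:ℝ)+3) ≠ 0 := by positivity
  have h6 : (2*(l:ℝ)+(j:ℝ)+2) ≠ 0 := by positivity
  have hfj' : (j.factorial : ℝ) ≠ 0 := (factR_pos j).ne'
  have hfl' : (l.factorial : ℝ) ≠ 0 := (factR_pos l).ne'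
  have hfc' : ((l+j+1).factorial : ℝ) ≠ 0 := (factR_pos (l+j+1)).ne'
  have hfd' : ((2*l+j+2).factorial : ℝ) ≠ 0 := (factR_pos (2*l+j+2)).ne'
  field_simp
  ring

lemma zseq_succ (n : ℕ) : zseq (n+1) = zseq n + 1/((n:ℝ)+1)^3 := by
  unfold zseq
  rw [Finset.sum_Icc_succ_top (by omega)]
  push_cast; ring

lemma cc_succ (n k : ℕ) : cc n (k+1) = cc n k + eps n (k+1) := by
  unfold cc
  rw [Finset.sum_Icc_succ_top (by omega)]
  ring

lemma cc_zero (n : ℕ) : cc n 0 = zseq n := by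
  unfold cc; simp

lemma dd_zero (n : ℕ) : dd (n+1) 0 = 1/((n:ℝ)+1)^3 := by
  unfold dd
  rw [show (n+1)-0-1 = n from by omega, show (n+1)+0 = n+1 from by ring,
      factS n (n+1) ((n:ℝ)+1) rfl (by push_cast; ring)]
  have h1 : ((n:ℝ)+1) ≠ 0 := by positivity
  have hf : ((n).factorial : ℝ) ≠ 0 := (factR_pos _).ne'
  simp [Nat.factorial_zero]
  field_simp

lemma cdiff : ∀ k n : ℕ, k ≤ n → cc (n+1) k - cc n k = dd (n+1) k := by
  intro k
  induction k with
  | zero => intro n _; rw [cc_zero, cc_zero, zseq_succ, dd_zero]; ring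
  | succ k ih =>
    intro n hk
    obtain ⟨j, rfl⟩ : ∃ j, n = k + j + 1 := ⟨n - k - 1, by omega⟩
    have h1 := ih (k+j+1) (by omega)
    have h2 := ident_diff k j
    rw [cc_succ, cc_succ]
    have e1 : k+j+1+1 = k+j+2 := by omega
    rw [e1] at h1 ⊢
    linarith [h1, h2]

lemma lam_zero' {n k : ℕ} (h : n < k) : lam n k = 0 := by
  unfold lam; rw [Nat.choose_eq_zero_of_lt h]; push_cast; ring

lemma lam_base (n : ℕ) : lam n 0 = 1 := by simp [lam]

lemma AT_zero {n k : ℕ} (h : n < k) : AT n k = 0 := by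
  unfold AT; rw [Nat.choose_eq_zero_of_lt h]; push_cast; ring

lemma BB_zero {n k : ℕ} (h : n < k) : BB n k = 0 := by
  unfold BB; rw [lam_zero' h]; ring

lemma AA_zero {n k : ℕ} (h : n < k) : AA n k = 0 := by
  unfold AA; rw [BB_zero h, AT_zero h]; ring

end STRUCT
-- ===== recurrences =====
noncomputable def asum (m : ℕ) : ℝ := ∑ k ∈ Finset.range (m+1), lam m k
noncomputable def bsum (m : ℕ) : ℝ := ∑ k ∈ Finset.range (m+1), lam m k * cc m k

lemma arec (n : ℕ) :
    ((n:ℝ)+3)^3 * asum (n+3) - PP (n+2) * asum (n+2) + ((n:ℝ)+2)^3 * asum (n+1) = 0 := by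
  have ha2 : asum (n+2) = ∑ k ∈ Finset.range (n+4), lam (n+2) k := by
    unfold asum
    apply Finset.sum_subset (Finset.range_subset_range.2 (by omega))
    intro x _ hx
    exact lam_zero' (by simp at hx ⊢; omega)
  have ha1 : asum (n+1) = ∑ k ∈ Finset.range (n+4), lam (n+1) k := by
    unfold asum
    apply Finset.sum_subset (Finset.range_subset_range.2 (by omega))
    intro x _ hx
    exact lam_zero' (by simp at hx ⊢; omega)
  have key : ∀ k ∈ Finset.range (n+4),
      ((n:ℝ)+3)^3 * lam (n+3) k - PP (n+2) * lam (n+2) k + ((n:ℝ)+2)^3 * lam (n+1) k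
        = (fun t => match t with | 0 => (0:ℝ) | (t+1) => BB (n+2) t) (k+1)
          - (fun t => match t with | 0 => (0:ℝ) | (t+1) => BB (n+2) t) k := by
    intro k hk
    simp only [Finset.mem_range] at hk
    rcases Nat.lt_or_ge k 1 with h0 | h1
    · interval_cases k
      simp only [lam_base]
      unfold BB
      rw [lam_base]
      push_cast
      unfold PP
      push_cast
      ring
    rcases Nat.lt_or_ge k (n+2) with hmid | hhi
    · -- 1 ≤ k ≤ n+1
      obtain ⟨l, rfl⟩ : ∃ l, k = l + 1 := ⟨k-1, by omega⟩
      obtain ⟨j, rfl⟩ : ∃ j, n = l + j := ⟨n-l, by omega⟩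
      have := identI l j
      simp only []
      push_cast at this ⊢
      linarith [this]
    rcases Nat.lt_or_ge k (n+3) with hmid2 | hhi2
    · -- k = n+2
      obtain rfl : k = n+2 := by omega
      have := identI_top (n+1)
      simp only [show n+1+2 = n+3 from by omega, show n+1+1 = n+2 from by omega] at this
      have hz : lam (n+1) (n+2) = 0 := lam_zero' (by omega)
      simp only []
      rw [hz]
      push_cast at this ⊢
      linarith [this]
    · -- k = n+3
      obtain rfl : k = n+3 := by omega
      have hK := identK (n+1)
      simp only [show n+1+2 = n+3 from by omega, show n+1+1 = n+2 from by omega] at hK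
      have hz1 : lam (n+2) (n+3) = 0 := lam_zero' (by omega)
      have hz2 : lam (n+1) (n+3) = 0 := lam_zero' (by omega)
      have hz3 : BB (n+2) (n+3) = 0 := BB_zero (by omega)
      show _ = BB (n+2) (n+3) - BB (n+2) (n+2)
      rw [hz1, hz2, hz3]
      push_cast at hK ⊢
      linarith [hK]
  have tele := Finset.sum_range_sub
      (fun t => match t with | 0 => (0:ℝ) | (t+1) => BB (n+2) t) (n+4)
  rw [← Finset.sum_congr rfl key] at tele
  have expand : ∑ k ∈ Finset.range (n+4),
      (((n:ℝ)+3)^3 * lam (n+3) k - PP (n+2) * lam (n+2) k + ((n:ℝ)+2)^3 * lam (n+1) k)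
      = ((n:ℝ)+3)^3 * asum (n+3) - PP (n+2) * asum (n+2) + ((n:ℝ)+2)^3 * asum (n+1) := by
    rw [ha2, ha1]
    unfold asum
    rw [Finset.mul_sum, Finset.mul_sum, Finset.mul_sum, ← Finset.sum_sub_distrib,
        ← Finset.sum_add_distrib]
  rw [expand] at tele
  rw [tele]
  show BB (n+2) (n+3) - 0 = 0
  rw [BB_zero (by omega)]
  ring

lemma brec (n : ℕ) :
    ((n:ℝ)+3)^3 * bsum (n+3) - PP (n+2) * bsum (n+2) + ((n:ℝ)+2)^3 * bsum (n+1) = 0 := by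
  have hb2 : bsum (n+2) = ∑ k ∈ Finset.range (n+4), lam (n+2) k * cc (n+2) k := by
    unfold bsum
    apply Finset.sum_subset (Finset.range_subset_range.2 (by omega))
    intro x _ hx
    rw [lam_zero' (by simp at hx ⊢; omega)]; ring
  have hb1 : bsum (n+1) = ∑ k ∈ Finset.range (n+4), lam (n+1) k * cc (n+1) k := by
    unfold bsum
    apply Finset.sum_subset (Finset.range_subset_range.2 (by omega))
    intro x _ hx
    rw [lam_zero' (by simp at hx ⊢; omega)]; ring
  have key : ∀ k ∈ Finset.range (n+4),
      ((n:ℝ)+3)^3 * (lam (n+3) k * cc (n+3) k) - PP (n+2) * (lam (n+2) k * cc (n+2) k)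
          + ((n:ℝ)+2)^3 * (lam (n+1) k * cc (n+1) k)
        = (fun t => match t with | 0 => (0:ℝ) | (t+1) => AA (n+2) t) (k+1)
          - (fun t => match t with | 0 => (0:ℝ) | (t+1) => AA (n+2) t) k := by
    intro k hk
    simp only [Finset.mem_range] at hk
    rcases Nat.lt_or_ge k 1 with h0 | h1
    · interval_cases k
      show _ = AA (n+2) 0 - 0
      simp only [lam_base, cc_zero, one_mul]
      have z3 : zseq (n+3) = zseq (n+2) + 1/((n:ℝ)+3)^3 := by
        have := zseq_succ (n+2); push_cast at this ⊢
        rw [show n+2+1 = n+3 from by omega, show (n:ℝ)+2+1 = (n:ℝ)+3 from by ring] at this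
        linarith
      have z1 : zseq (n+2) = zseq (n+1) + 1/((n:ℝ)+2)^3 := by
        have := zseq_succ (n+1); push_cast at this ⊢
        rw [show n+1+1 = n+2 from by omega, show (n:ℝ)+1+1 = (n:ℝ)+2 from by ring] at this
        linarith
      unfold AA BB AT PP
      rw [lam_base, cc_zero]
      have h2 : ((n:ℝ)+2) ≠ 0 := by positivity
      have h3 : ((n:ℝ)+3) ≠ 0 := by positivity
      rw [z3, z1]
      push_cast
      field_simp
      ring
    rcases Nat.lt_or_ge k (n+2) with hmid | hhi
    · -- 1 ≤ k ≤ n+1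
      obtain ⟨l, rfl⟩ : ∃ l, k = l + 1 := ⟨k-1, by omega⟩
      obtain ⟨j, rfl⟩ : ∃ j, n = l + j := ⟨n-l, by omega⟩
      show _ = AA (l+j+2) (l+1) - AA (l+j+2) l
      have E1 : cc (l+j+3) (l+1) - cc (l+j+2) (l+1) = dd (l+j+3) (l+1) := by
        have := cdiff (l+1) (l+j+2) (by omega)
        rw [show l+j+2+1 = l+j+3 from by omega] at this; exact this
      have E2 : cc (l+j+2) (l+1) - cc (l+j+1) (l+1) = dd (l+j+2) (l+1) := by
        have := cdiff (l+1) (l+j+1) (by omega)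
        rw [show l+j+1+1 = l+j+2 from by omega] at this; exact this
      have E3 : cc (l+j+2) (l+1) = cc (l+j+2) l + eps (l+j+2) (l+1) := cc_succ _ _
      have I1 := identI l j
      have I2 := identII l j
      unfold AA
      push_cast at I1 I2 E1 E2 E3 ⊢
      linear_combination (cc (l+j+2) (l+1)) * I1 + I2
        + ((l:ℝ)+(j:ℝ)+3)^3 * lam (l+j+3) (l+1) * E1
        - ((l:ℝ)+(j:ℝ)+2)^3 * lam (l+j+1) (l+1) * E2
        - BB (l+j+2) l * E3
    rcases Nat.lt_or_ge k (n+3) with hmid2 | hhi2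
    · -- k = n+2
      obtain rfl : k = n+2 := by omega
      show _ = AA (n+2) (n+2) - AA (n+2) (n+1)
      have E1 : cc (n+3) (n+2) - cc (n+2) (n+2) = dd (n+3) (n+2) := by
        have := cdiff (n+2) (n+2) (by omega)
        rw [show n+2+1 = n+3 from by omega] at this; exact this
      have E3 : cc (n+2) (n+2) = cc (n+2) (n+1) + eps (n+2) (n+2) := by
        have := cc_succ (n+2) (n+1)
        rw [show n+1+1 = n+2 from by omega] at this; exact this
      have I1 := identI_top (n+1)
      have I2 := identII_top (n+1)
      simp only [show n+1+2 = n+3 from by omega, show n+1+1 = n+2 from by omega] at I1 I2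
      have hz : lam (n+1) (n+2) = 0 := lam_zero' (by omega)
      unfold AA
      rw [hz]
      push_cast at I1 I2 E1 E3 ⊢
      linear_combination (cc (n+2) (n+2)) * I1 + I2
        + ((n:ℝ)+3)^3 * lam (n+3) (n+2) * E1
        - BB (n+2) (n+1) * E3
    · -- k = n+3
      obtain rfl : k = n+3 := by omega
      show _ = AA (n+2) (n+3) - AA (n+2) (n+2)
      have hz1 : lam (n+2) (n+3) = 0 := lam_zero' (by omega)
      have hz2 : lam (n+1) (n+3) = 0 := lam_zero' (by omega)
      have hz3 : AA (n+2) (n+3) = 0 := AA_zero (by omega)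
      have E1 : cc (n+3) (n+2) - cc (n+2) (n+2) = dd (n+3) (n+2) := by
        have := cdiff (n+2) (n+2) (by omega)
        rw [show n+2+1 = n+3 from by omega] at this; exact this
      have E4 : cc (n+3) (n+3) = cc (n+3) (n+2) + eps (n+3) (n+3) := by
        have := cc_succ (n+3) (n+2)
        rw [show n+2+1 = n+3 from by omega] at this; exact this
      have hK := identK (n+1)
      have hT := identTop (n+1)
      simp only [show n+1+2 = n+3 from by omega, show n+1+1 = n+2 from by omega] at hK hT
      unfold AA
      rw [hz1, hz2, BB_zero (show n+2 < n+3 by omega), AT_zero (show n+2 < n+3 by omega)]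
      push_cast at hK hT E1 E4 ⊢
      linear_combination (cc (n+2) (n+2)) * hK + hT
        + ((n:ℝ)+3)^3 * lam (n+3) (n+3) * (E1 + E4)
  have tele := Finset.sum_range_sub
      (fun t => match t with | 0 => (0:ℝ) | (t+1) => AA (n+2) t) (n+4)
  rw [← Finset.sum_congr rfl key] at tele
  have expand : ∑ k ∈ Finset.range (n+4),
      (((n:ℝ)+3)^3 * (lam (n+3) k * cc (n+3) k) - PP (n+2) * (lam (n+2) k * cc (n+2) k)
        + ((n:ℝ)+2)^3 * (lam (n+1) k * cc (n+1) k))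
      = ((n:ℝ)+3)^3 * bsum (n+3) - PP (n+2) * bsum (n+2) + ((n:ℝ)+2)^3 * bsum (n+1) := by
    rw [hb2, hb1]
    unfold bsum
    rw [Finset.mul_sum, Finset.mul_sum, Finset.mul_sum, ← Finset.sum_sub_distrib,
        ← Finset.sum_add_distrib]
  rw [expand] at tele
  rw [tele]
  show AA (n+2) (n+3) - 0 = 0
  rw [AA_zero (by omega)]
  ring

-- ===== bridges =====
lemma sum_range_succ_Icc (f : ℕ → ℝ) (n : ℕ) :
    ∑ k ∈ Finset.range (n+1), f k = f 0 + ∑ k ∈ Finset.Icc 1 n, f k := by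
  induction n with
  | zero => simp
  | succ n ih => rw [Finset.sum_range_succ, ih, Finset.sum_Icc_succ_top (by omega)]; ring

lemma aseq_asum (n : ℕ) : aseq n = asum n := rfl

lemma bseq_bsum (n : ℕ) : bseq n = bsum n := by
  unfold bseq bsum
  have expand : ∀ k, lam n k * cc n k
      = lam n k * zseq n + ∑ m ∈ Finset.Icc 1 k, lam n k * eps n m := by
    intro k; unfold cc; rw [mul_add, Finset.mul_sum]
  rw [Finset.sum_congr rfl (fun k _ => expand k), Finset.sum_add_distrib, ← Finset.sum_mul]
  have h0 : (∑ k ∈ Finset.range (n+1), lam n k) = aseq n := rfl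
  rw [h0]
  congr 1
  rw [sum_range_succ_Icc (fun k => ∑ m ∈ Finset.Icc 1 k, lam n k * eps n m) n]
  simp only [Finset.Icc_eq_empty_of_lt (by omega : (1:ℕ) > 0), Finset.sum_empty, zero_add]
  apply Finset.sum_congr rfl
  intro k _
  apply Finset.sum_congr rfl
  intro m _
  unfold lam eps
  ring

-- ===== base values =====
lemma aseq_one : aseq 1 = 5 := by
  unfold aseq
  rw [show (1+1 : ℕ) = 2 from rfl, Finset.sum_range_succ, Finset.sum_range_succ,
      Finset.sum_range_zero]
  norm_num [Nat.choose]

lemma aseq_two : aseq 2 = 73 := by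
  unfold aseq
  rw [show (2+1 : ℕ) = 3 from rfl, Finset.sum_range_succ, Finset.sum_range_succ,
      Finset.sum_range_succ, Finset.sum_range_zero]
  norm_num [Nat.choose]

lemma zseq_one : zseq 1 = 1 := by
  unfold zseq; rw [show (1:ℕ) = 0+1 from rfl, Finset.sum_Icc_succ_top (by omega)]
  simp

lemma zseq_two : zseq 2 = 9/8 := by
  have h := zseq_succ 1
  rw [zseq_one] at h
  rw [show (2:ℕ) = 1+1 from rfl, h]
  norm_num

lemma bseq_one : bseq 1 = 6 := by
  unfold bseq
  rw [aseq_one, zseq_one]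
  rw [show Finset.Icc 1 1 = {1} from rfl]
  simp only [Finset.sum_singleton]
  norm_num [Nat.choose]

lemma bseq_two : bseq 2 = 351/4 := by
  unfold bseq
  rw [aseq_two, zseq_two]
  rw [show (Finset.Icc 1 2 : Finset ℕ) = {1, 2} from by decide]
  rw [Finset.sum_pair (by omega)]
  rw [show (Finset.Icc 1 1 : Finset ℕ) = {1} from by decide,
      show (Finset.Icc 1 2 : Finset ℕ) = {1, 2} from by decide]
  rw [Finset.sum_singleton, Finset.sum_pair (by omega)]
  norm_num [Nat.choose]

-- ===== positivity =====
lemma aseq_pos (n : ℕ) : 0 < aseq n := by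
  unfold aseq
  apply Finset.sum_pos' (fun k _ => by positivity)
  refine ⟨0, by simp, ?_⟩
  simp

-- ===== Q lemma =====
lemma qlem : ∀ n : ℕ, aseq (n+1) * bseq (n+2) - aseq (n+2) * bseq (n+1) = 6/((n:ℝ)+2)^3 := by
  intro n
  induction n with
  | zero =>
    rw [aseq_one, aseq_two, bseq_one, bseq_two]
    norm_num
  | succ n ih =>
    have hA := arec n
    have hB := brec n
    rw [← aseq_asum, ← aseq_asum, ← aseq_asum] at hA
    rw [← bseq_bsum, ← bseq_bsum, ← bseq_bsum] at hB
    have h3 : ((n:ℝ)+3) ≠ 0 := by positivity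
    push_cast at ih ⊢
    rw [show n+1+2 = n+3 from by omega, show n+1+1 = n+2 from by omega,
        show (n:ℝ)+1+2 = (n:ℝ)+3 from by ring]
    have ih' : ((n:ℝ)+2)^3 * (aseq (n+1) * bseq (n+2) - aseq (n+2) * bseq (n+1)) = 6 := by
      rw [ih]; field_simp
    rw [eq_div_iff (by positivity : ((n:ℝ)+3)^3 ≠ 0)]
    linear_combination aseq (n+2) * hB - bseq (n+2) * hA + ih'

lemma ratio_lt (n : ℕ) : bseq (n+1)/aseq (n+1) < bseq (n+2)/aseq (n+2) := by
  rw [div_lt_div_iff₀ (aseq_pos _) (aseq_pos _)]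
  have q := qlem n
  have h : (0:ℝ) < 6/((n:ℝ)+2)^3 := by positivity
  nlinarith [q, h]

-- ===== convergence =====
lemma hsummable : Summable (fun m : ℕ => 1 / ((m:ℝ)+1)^3) := by
  have h : Summable (fun m : ℕ => 1/(m:ℝ)^3) := Real.summable_one_div_nat_pow.mpr (by norm_num)
  have := (summable_nat_add_iff 1).mpr h
  apply this.congr
  intro m
  push_cast
  ring

lemma zseq_eq_range (n : ℕ) : zseq n = ∑ i ∈ Finset.range n, 1/((i:ℝ)+1)^3 := by
  induction n with
  | zero => simp [zseq]
  | succ n ih => rw [zseq_succ, Finset.sum_range_succ, ih]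

lemma zseq_tendsto : Filter.Tendsto zseq Filter.atTop (nhds zeta3) := by
  have := hsummable.hasSum.tendsto_sum_nat
  apply this.congr
  intro n
  rw [zseq_eq_range]

lemma choose_ge (n : ℕ) : ∀ m, 1 ≤ m → n+1 ≤ (n+m).choose m := by
  intro m
  induction m with
  | zero => omega
  | succ m ih =>
    intro _
    rcases Nat.eq_or_lt_of_le (show 1 ≤ m+1 from by omega) with h | h
    · rw [← h]; simp
    have hm : 1 ≤ m := by omega
    have h1 := ih hm
    have h2 : (n+m+1) * (n+m).choose m = (n+m+1).choose (m+1) * (m+1) := by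
      have := Nat.add_one_mul_choose_eq (n+m) m
      simpa using this
    have h3 : (m+1) * (n+m).choose m ≤ (n+m+1).choose (m+1) * (m+1) := by
      rw [← h2]
      exact Nat.mul_le_mul_right _ (by omega)
    have h4 : (n+m).choose m ≤ (n+m+1).choose (m+1) := by
      apply Nat.le_of_mul_le_mul_left _ (show 0 < m+1 by omega)
      calc (m+1) * (n+m).choose m ≤ (n+m+1).choose (m+1) * (m+1) := h3
        _ = (m+1) * (n+m+1).choose (m+1) := by ring
    calc n+1 ≤ (n+m).choose m := h1
      _ ≤ (n+m+1).choose (m+1) := h4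
      _ = (n+(m+1)).choose (m+1) := by rw [show n+m+1 = n+(m+1) from by ring]

lemma eps_abs (n m : ℕ) (h1 : 1 ≤ m) (h2 : m ≤ n) :
    |eps n m| ≤ 1/(2*(m:ℝ)^3*((n:ℝ)+1)) := by
  unfold eps
  have hc1 : (1:ℝ) ≤ (n.choose m : ℝ) := by exact_mod_cast Nat.one_le_iff_ne_zero.mpr (Nat.choose_pos h2).ne'
  have hc2 : ((n:ℝ)+1) ≤ ((n+m).choose m : ℝ) := by
    exact_mod_cast choose_ge n m h1
  have hm3 : (1:ℝ) ≤ (m:ℝ)^3 := by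
    have h : (1:ℝ) ≤ (m:ℝ) := by exact_mod_cast h1
    calc (1:ℝ) = 1^3 := by norm_num
      _ ≤ (m:ℝ)^3 := pow_le_pow_left₀ (by norm_num) h 3
  have hden : (0:ℝ) < 2*(m:ℝ)^3*(n.choose m : ℝ)*((n+m).choose m : ℝ) := by
    have : (0:ℝ) < (n.choose m : ℝ) := by linarith
    have : (0:ℝ) < ((n+m).choose m : ℝ) := by linarith
    positivity
  rw [abs_div, abs_pow, abs_neg, abs_one, one_pow]
  rw [abs_of_pos hden]
  rw [div_le_div_iff₀ hden (by positivity)]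
  have hnn : (0:ℝ) < (n:ℝ)+1 := by positivity
  calc (1:ℝ) * (2*(m:ℝ)^3*((n:ℝ)+1)) = 2*(m:ℝ)^3*((n:ℝ)+1)*1*1 := by ring
    _ ≤ 2*(m:ℝ)^3*(n.choose m : ℝ)*((n+m).choose m : ℝ) := by
        have e1 : 2*(m:ℝ)^3*((n:ℝ)+1)*1*1 ≤ 2*(m:ℝ)^3*((n:ℝ)+1)*(n.choose m : ℝ)*1 := by
          apply mul_le_mul_of_nonneg_right _ (by norm_num)
          apply mul_le_mul_of_nonneg_left hc1 (by positivity)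
        have e2 : 2*(m:ℝ)^3*((n:ℝ)+1)*(n.choose m : ℝ)*1 ≤ 2*(m:ℝ)^3*(n.choose m : ℝ)*((n+m).choose m : ℝ) := by
          have : 2*(m:ℝ)^3*((n:ℝ)+1)*(n.choose m : ℝ)*1 = (2*(m:ℝ)^3*(n.choose m : ℝ))*((n:ℝ)+1) := by ring
          rw [this, show 2*(m:ℝ)^3*(n.choose m : ℝ)*((n+m).choose m : ℝ) = (2*(m:ℝ)^3*(n.choose m : ℝ))*((n+m).choose m : ℝ) from by ring]
          apply mul_le_mul_of_nonneg_left hc2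
          have : (0:ℝ) < (n.choose m:ℝ) := by linarith
          positivity
        linarith
    _ = 1 * (2*(m:ℝ)^3*(n.choose m : ℝ)*((n+m).choose m : ℝ)) := by ring

lemma zseq_le2 (k : ℕ) : zseq k ≤ 2 - 2/((k:ℝ)+1) := by
  induction k with
  | zero => simp [zseq]
  | succ k ih =>
    rw [zseq_succ]
    have hk : (0:ℝ) ≤ (k:ℝ) := by positivity
    have key : 1/((k:ℝ)+1)^3 ≤ 2/((k:ℝ)+1) - 2/((k:ℝ)+1+1) := by
      rw [div_sub_div _ _ (by positivity) (by positivity), div_le_div_iff₀ (by positivity) (by positivity)]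
      ring_nf
      nlinarith [sq_nonneg ((k:ℝ)+1), sq_nonneg (k:ℝ)]
    push_cast
    linarith

lemma s_abs (n k : ℕ) (hk : k ≤ n) :
    |∑ m ∈ Finset.Icc 1 k, eps n m| ≤ 1/((n:ℝ)+1) := by
  calc |∑ m ∈ Finset.Icc 1 k, eps n m| ≤ ∑ m ∈ Finset.Icc 1 k, |eps n m| :=
        Finset.abs_sum_le_sum_abs _ _
    _ ≤ ∑ m ∈ Finset.Icc 1 k, 1/(2*(m:ℝ)^3*((n:ℝ)+1)) := by
        apply Finset.sum_le_sum
        intro m hm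
        simp only [Finset.mem_Icc] at hm
        exact eps_abs n m hm.1 (le_trans hm.2 hk)
    _ = (1/(2*((n:ℝ)+1))) * ∑ m ∈ Finset.Icc 1 k, 1/(m:ℝ)^3 := by
        rw [Finset.mul_sum]
        apply Finset.sum_congr rfl
        intro m _
        field_simp
    _ ≤ (1/(2*((n:ℝ)+1))) * 2 := by
        apply mul_le_mul_of_nonneg_left _ (by positivity)
        have h1 := zseq_le2 k
        have h2 : (0:ℝ) < 2/((k:ℝ)+1) := by positivity
        unfold zseq at h1
        linarith
    _ = 1/((n:ℝ)+1) := by field_simp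
 
lemma corr_abs (n : ℕ) : |bseq n - aseq n * zseq n| ≤ aseq n * (1/((n:ℝ)+1)) := by
  have expand : bseq n - aseq n * zseq n
      = ∑ k ∈ Finset.range (n+1), lam n k * (∑ m ∈ Finset.Icc 1 k, eps n m) := by
    rw [bseq_bsum]
    unfold bsum cc
    rw [show (∑ k ∈ Finset.range (n+1), lam n k * (zseq n + ∑ m ∈ Finset.Icc 1 k, eps n m))
        = (∑ k ∈ Finset.range (n+1), lam n k) * zseq n
          + ∑ k ∈ Finset.range (n+1), lam n k * (∑ m ∈ Finset.Icc 1 k, eps n m) from by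
      rw [Finset.sum_mul, ← Finset.sum_add_distrib]
      apply Finset.sum_congr rfl
      intro k _
      ring]
    have h0 : (∑ k ∈ Finset.range (n+1), lam n k) = aseq n := rfl
    rw [h0]
    ring
  rw [expand]
  calc |∑ k ∈ Finset.range (n+1), lam n k * (∑ m ∈ Finset.Icc 1 k, eps n m)|
      ≤ ∑ k ∈ Finset.range (n+1), |lam n k * (∑ m ∈ Finset.Icc 1 k, eps n m)| :=
        Finset.abs_sum_le_sum_abs _ _
    _ ≤ ∑ k ∈ Finset.range (n+1), lam n k * (1/((n:ℝ)+1)) := by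
        apply Finset.sum_le_sum
        intro k hk
        simp only [Finset.mem_range] at hk
        rw [abs_mul]
        have hlam : (0:ℝ) ≤ lam n k := by unfold lam; positivity
        rw [abs_of_nonneg hlam]
        exact mul_le_mul_of_nonneg_left (s_abs n k (by omega)) hlam
    _ = aseq n * (1/((n:ℝ)+1)) := by
        rw [← Finset.sum_mul]
        congr 1

lemma ratio_diff_abs (n : ℕ) : |bseq n / aseq n - zseq n| ≤ 1/((n:ℝ)+1) := by
  have ha := aseq_pos n
  have : bseq n / aseq n - zseq n = (bseq n - aseq n * zseq n) / aseq n := by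
    field_simp
  rw [this, abs_div, abs_of_pos ha, div_le_iff₀ ha]
  calc |bseq n - aseq n * zseq n| ≤ aseq n * (1/((n:ℝ)+1)) := corr_abs n
    _ = 1/((n:ℝ)+1) * aseq n := by ring

lemma ratio_tendsto :
    Filter.Tendsto (fun n => bseq n / aseq n) Filter.atTop (nhds zeta3) := by
  have h1 : Filter.Tendsto (fun n : ℕ => bseq n / aseq n - zseq n) Filter.atTop (nhds 0) := by
    apply squeeze_zero_norm (fun n => ratio_diff_abs n)
    exact tendsto_one_div_add_atTop_nhds_zero_nat
  have := Filter.Tendsto.add h1 zseq_tendsto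
  rw [zero_add] at this
  apply this.congr
  intro n
  ring

/-- For every `n ≥ 2`, `0 < ζ(3) - b n / a n`. -/
theorem lt0_zeta3_minus_b_over_a (n : ℕ) (hn : 2 ≤ n) :
    0 < zeta3 - bseq n / aseq n := by
  have mono_from : ∀ N, n+1 ≤ N → bseq (n+1)/aseq (n+1) ≤ bseq N/aseq N := by
    intro N
    induction N with
    | zero => omega
    | succ N ih =>
      intro hN
      rcases Nat.eq_or_lt_of_le hN with h | h
      · rw [h]
      have hN' : n+1 ≤ N := by omega
      have step : bseq N/aseq N < bseq (N+1)/aseq (N+1) := by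
        obtain ⟨m, rfl⟩ : ∃ m, N = m+1 := ⟨N-1, by omega⟩
        have := ratio_lt m
        rw [show m+2 = m+1+1 from by omega] at this
        exact this
      exact le_trans (ih hN') (le_of_lt step)
  have hle : bseq (n+1)/aseq (n+1) ≤ zeta3 :=
    ge_of_tendsto ratio_tendsto (Filter.eventually_atTop.2 ⟨n+1, mono_from⟩)
  have hlt : bseq n/aseq n < bseq (n+1)/aseq (n+1) := by
    obtain ⟨m, rfl⟩ : ∃ m, n = m+1 := ⟨n-1, by omega⟩
    exact ratio_lt m
  linarith
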